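/- The dynamic programming recursion is correct: for h ≥ 1 and any integer array (q_1,...,q_k) with the feasible set nonempty, f_h(q_1,...,q_k) = max over τ ∈ {1,...,k_h} with q'_ℓ(τ) ≥ 0 for all ℓ of [((k+k_h)/2 + 1 - τ)·(k/k_h)·s_h + f_{h-1}(q'_1(τ),...,q'_k(τ))], where q'_ℓ(τ) = q_ℓ - ⌊(ℓ - τ + k_h)/k_h⌋·s_h. -/

import Mathlib

open scoped Classical

/-- Feasibility of a binary assignment `x` of the first `h` items (indices `0,...,h-1`):
each item `i` is reordered exactly once per `kc i` time units, and the cumulative reorder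
sizes up to time `ℓ` are at most `q ℓ` for `ℓ = 1,...,k`. -/
def DPFeasible (k h : ℕ) (kc : ℕ → ℕ) (s : ℕ → ℤ) (q : ℕ → ℤ) (x : ℕ → ℕ → ℤ) : Prop :=
  (∀ i j, x i j = 0 ∨ x i j = 1) ∧
  (∀ i < h, ∑ j ∈ Finset.Icc 1 (kc i), x i j = 1) ∧
  (∀ i < h, ∀ j, kc i < j → j ≤ k → x i j = x i (j - kc i)) ∧
  (∀ ℓ, 1 ≤ ℓ → ℓ ≤ k → ∑ j ∈ Finset.Icc 1 ℓ, ∑ i ∈ Finset.range h, s i * x i j ≤ q ℓ)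

/-- The objective value of an assignment of the first `h` items. -/
noncomputable def DPobj (k h : ℕ) (s : ℕ → ℤ) (x : ℕ → ℕ → ℤ) : ℝ :=
  ∑ j ∈ Finset.Icc 1 k, ((k : ℝ) - (j : ℝ) + 1) * ∑ i ∈ Finset.range h, (s i : ℝ) * (x i j : ℝ)

/-- The dynamic programming function `f_h(q)`: the supremum (in `EReal`, so `⊥ = -∞` if
infeasible) of the objective over feasible assignments of the first `h` items. -/
noncomputable def DPf (k : ℕ) (kc : ℕ → ℕ) (s : ℕ → ℤ) (h : ℕ) (q : ℕ → ℤ) : EReal :=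
  sSup {v : EReal | ∃ x, DPFeasible k h kc s q x ∧ v = (DPobj k h s x : EReal)}


/-- From a binary sequence summing to 1 on `Icc 1 m`, extract the unique support point. -/
lemma dp_exists_support (m : ℕ) (x : ℕ → ℤ) (hbin : ∀ j, x j = 0 ∨ x j = 1)
    (hsum : ∑ j ∈ Finset.Icc 1 m, x j = 1) :
    ∃ τ ∈ Finset.Icc 1 m, x τ = 1 ∧ ∀ j ∈ Finset.Icc 1 m, j ≠ τ → x j = 0 := by
  by_cases hex : ∃ τ ∈ Finset.Icc 1 m, x τ = 1
  · obtain ⟨τ, hτm, hτ⟩ := hex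
    refine ⟨τ, hτm, hτ, ?_⟩
    intro j hj hne
    by_contra hx0
    have hxj : x j = 1 := (hbin j).resolve_left hx0
    have hsub : ({j, τ} : Finset ℕ) ⊆ Finset.Icc 1 m := by
      intro a ha
      simp only [Finset.mem_insert, Finset.mem_singleton] at ha
      rcases ha with rfl | rfl <;> assumption
    have h2 : ∑ a ∈ ({j, τ} : Finset ℕ), x a = 2 := by
      rw [Finset.sum_pair hne, hxj, hτ]; norm_num
    have hle : ∑ a ∈ ({j, τ} : Finset ℕ), x a ≤ ∑ a ∈ Finset.Icc 1 m, x a := by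
      apply Finset.sum_le_sum_of_subset_of_nonneg hsub
      intro a _ _
      rcases hbin a with h | h <;> omega
    omega
  · push_neg at hex
    have : ∑ j ∈ Finset.Icc 1 m, x j = 0 := by
      apply Finset.sum_eq_zero
      intro j hj
      rcases hbin j with h | h
      · exact h
      · exact absurd h (hex j hj)
    omega

/-- Characterization of a binary, periodic, once-per-period schedule. -/
lemma dp_char (k m : ℕ) (hm : 0 < m) (x : ℕ → ℤ)
    (hbin : ∀ j, x j = 0 ∨ x j = 1)
    (hsum : ∑ j ∈ Finset.Icc 1 m, x j = 1)
    (hper : ∀ j, m < j → j ≤ k → x j = x (j - m)) :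
    ∃ τ ∈ Finset.Icc 1 m, ∀ j, 1 ≤ j → j ≤ k → (x j = 1 ↔ ∃ i, j = τ + i * m) := by
  obtain ⟨τ, hτmem, hτ1, hτ0⟩ := dp_exists_support m x hbin hsum
  obtain ⟨hτl, hτm⟩ := Finset.mem_Icc.1 hτmem
  refine ⟨τ, hτmem, ?_⟩
  intro j
  induction j using Nat.strong_induction_on with
  | _ j ih =>
    intro hj1 hjk
    by_cases hjm : j ≤ m
    · constructor
      · intro hx
        refine ⟨0, ?_⟩
        by_contra hne
        have hj0 : x j = 0 := hτ0 j (Finset.mem_Icc.2 ⟨hj1, hjm⟩) (by omega)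
        omega
      · rintro ⟨i, rfl⟩
        rcases i with _ | i
        · simpa using hτ1
        · exfalso
          have : (i + 1) * m = i * m + m := by ring
          omega
    · push_neg at hjm
      have hper' : x j = x (j - m) := hper j hjm hjk
      have ihr := ih (j - m) (by omega) (by omega) (by omega)
      rw [hper', ihr]
      constructor
      · rintro ⟨i, hi⟩
        refine ⟨i + 1, ?_⟩
        have : (i + 1) * m = i * m + m := by ring
        omega
      · rintro ⟨i, hi⟩
        rcases i with _ | i
        · exfalso; omega
        · refine ⟨i, ?_⟩
          have : (i + 1) * m = i * m + m := by ring
          omega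

/-- Cumulative sum of a characterized schedule. -/
lemma dp_cum (k m : ℕ) (hm : 0 < m) (x : ℕ → ℤ) (τ : ℕ) (hτ1 : 1 ≤ τ) (hτm : τ ≤ m)
    (hbin : ∀ j, x j = 0 ∨ x j = 1)
    (hchar : ∀ j, 1 ≤ j → j ≤ k → (x j = 1 ↔ ∃ i, j = τ + i * m))
    (ℓ : ℕ) (hℓ : ℓ ≤ k) :
    ∑ j ∈ Finset.Icc 1 ℓ, x j = ((ℓ : ℤ) - τ + m) / (m : ℤ) := by
  set c : ℕ := (ℓ + m - τ) / m with hc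
  have hcast : ((ℓ : ℤ) - τ + m) / (m : ℤ) = (c : ℤ) := by
    rw [hc, Int.natCast_div]
    congr 1
    omega
  have key : ∀ i : ℕ, (τ + i * m ≤ ℓ ↔ i < c) := by
    intro i
    have h1 : (i + 1) * m = i * m + m := by ring
    have h2 : i < c ↔ (i + 1) * m ≤ ℓ + m - τ := by
      rw [hc]
      constructor
      · intro h; exact (Nat.le_div_iff_mul_le hm).1 h
      · intro h; exact (Nat.le_div_iff_mul_le hm).2 h
    omega
  have hinj : Function.Injective (fun i : ℕ => τ + i * m) := by
    intro a b hab
    simp only at hab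
    exact Nat.eq_of_mul_eq_mul_right hm (by omega)
  have himg : (Finset.Icc 1 ℓ).filter (fun j => x j = 1)
      = (Finset.range c).image (fun i => τ + i * m) := by
    ext j
    simp only [Finset.mem_filter, Finset.mem_Icc, Finset.mem_image, Finset.mem_range]
    constructor
    · rintro ⟨⟨hj1, hjℓ⟩, hx⟩
      obtain ⟨i, rfl⟩ := (hchar j hj1 (hjℓ.trans hℓ)).1 hx
      exact ⟨i, (key i).1 hjℓ, rfl⟩
    · rintro ⟨i, hi, rfl⟩
      have hle := (key i).2 hi
      exact ⟨⟨by omega, hle⟩, (hchar _ (by omega) (hle.trans hℓ)).2 ⟨i, rfl⟩⟩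
  have hsum : ∑ j ∈ Finset.Icc 1 ℓ, x j = ∑ j ∈ Finset.Icc 1 ℓ, (if x j = 1 then (1:ℤ) else 0) :=
    Finset.sum_congr rfl (fun j _ => by rcases hbin j with h | h <;> simp [h])
  rw [hsum, ← Finset.sum_filter, himg, Finset.sum_const, Finset.card_image_of_injective _ hinj,
    Finset.card_range, hcast]
  simp

/-- Objective contribution of a characterized schedule. -/
lemma dp_obj (k m : ℕ) (hm : 0 < m) (hdvd : m ∣ k) (x : ℕ → ℤ) (τ : ℕ)
    (hτ1 : 1 ≤ τ) (hτm : τ ≤ m)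
    (hbin : ∀ j, x j = 0 ∨ x j = 1)
    (hchar : ∀ j, 1 ≤ j → j ≤ k → (x j = 1 ↔ ∃ i, j = τ + i * m)) :
    ∑ j ∈ Finset.Icc 1 k, ((k : ℝ) - (j : ℝ) + 1) * (x j : ℝ)
      = (((k : ℝ) + (m : ℝ)) / 2 + 1 - (τ : ℝ)) * ((k : ℝ) / (m : ℝ)) := by
  set qn : ℕ := k / m with hqn
  have hk : k = m * qn := (Nat.mul_div_cancel' hdvd).symm
  have hc : (k + m - τ) / m = qn := by
    have hcomm : m * qn = qn * m := mul_comm _ _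
    have hrw : k + m - τ = (m - τ) + qn * m := by omega
    rw [hrw, Nat.add_mul_div_right _ _ hm, Nat.div_eq_of_lt (by omega)]
    omega
  have key : ∀ i : ℕ, (τ + i * m ≤ k ↔ i < qn) := by
    intro i
    have h1 : (i + 1) * m = i * m + m := by ring
    have h2 : i < qn ↔ (i + 1) * m ≤ k + m - τ := by
      rw [← hc]
      constructor
      · intro h; exact (Nat.le_div_iff_mul_le hm).1 h
      · intro h; exact (Nat.le_div_iff_mul_le hm).2 h
    omega
  have hinj : Function.Injective (fun i : ℕ => τ + i * m) := by
    intro a b hab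
    simp only at hab
    exact Nat.eq_of_mul_eq_mul_right hm (by omega)
  have himg : (Finset.Icc 1 k).filter (fun j => x j = 1)
      = (Finset.range qn).image (fun i => τ + i * m) := by
    ext j
    simp only [Finset.mem_filter, Finset.mem_Icc, Finset.mem_image, Finset.mem_range]
    constructor
    · rintro ⟨⟨hj1, hjk⟩, hx⟩
      obtain ⟨i, rfl⟩ := (hchar j hj1 hjk).1 hx
      exact ⟨i, (key i).1 hjk, rfl⟩
    · rintro ⟨i, hi, rfl⟩
      have hle := (key i).2 hi
      exact ⟨⟨by omega, hle⟩, (hchar _ (by omega) hle).2 ⟨i, rfl⟩⟩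
  have hstep : ∑ j ∈ Finset.Icc 1 k, ((k : ℝ) - (j : ℝ) + 1) * (x j : ℝ)
      = ∑ i ∈ Finset.range qn, ((k : ℝ) - ((τ + i * m : ℕ) : ℝ) + 1) := by
    rw [show (∑ j ∈ Finset.Icc 1 k, ((k : ℝ) - (j : ℝ) + 1) * (x j : ℝ))
        = ∑ j ∈ Finset.Icc 1 k, (if x j = 1 then ((k : ℝ) - (j : ℝ) + 1) else 0) from
      Finset.sum_congr rfl (fun j _ => by rcases hbin j with h | h <;> simp [h])]
    rw [← Finset.sum_filter, himg, Finset.sum_image (fun a _ b _ hab => hinj hab)]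
  rw [hstep]
  have hG : (∑ i ∈ Finset.range qn, (i : ℝ)) = qn * (qn - 1) / 2 := by
    induction qn with
    | zero => simp
    | succ nn ihn => rw [Finset.sum_range_succ, ihn]; push_cast; ring
  have hsum2 : ∑ i ∈ Finset.range qn, ((k : ℝ) - ((τ + i * m : ℕ) : ℝ) + 1)
      = qn * ((k : ℝ) - τ + 1) - m * (qn * (qn - 1) / 2) := by
    have h1 : ∀ i ∈ Finset.range qn, ((k : ℝ) - ((τ + i * m : ℕ) : ℝ) + 1)
        = ((k : ℝ) - (τ : ℝ) + 1) - (m : ℝ) * (i : ℝ) := fun i _ => by push_cast; ring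
    rw [Finset.sum_congr rfl h1, Finset.sum_sub_distrib, Finset.sum_const, Finset.card_range,
      nsmul_eq_mul, ← Finset.mul_sum, hG]
  rw [hsum2]
  have hkr : (k : ℝ) = (m : ℝ) * (qn : ℝ) := by exact_mod_cast congrArg (Nat.cast : ℕ → ℝ) hk
  have hm0 : (m : ℝ) ≠ 0 := by positivity
  rw [hkr]
  field_simp
  ring

/-- The canonical schedule with first reorder at `τ` and period `m`. -/
noncomputable def dpSched (τ m : ℕ) : ℕ → ℤ := fun j => if ∃ i, j = τ + i * m then 1 else 0

lemma dpSched_binary (τ m : ℕ) : ∀ j, dpSched τ m j = 0 ∨ dpSched τ m j = 1 := by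
  intro j
  unfold dpSched
  by_cases hp : ∃ i, j = τ + i * m <;> simp [hp]

lemma dpSched_char (τ m : ℕ) : ∀ j, (dpSched τ m j = 1 ↔ ∃ i, j = τ + i * m) := by
  intro j
  unfold dpSched
  by_cases hp : ∃ i, j = τ + i * m <;> simp [hp]

lemma dpSched_sum (τ m : ℕ) (hτ1 : 1 ≤ τ) (hτm : τ ≤ m) :
    ∑ j ∈ Finset.Icc 1 m, dpSched τ m j = 1 := by
  have hstep : ∀ j ∈ Finset.Icc 1 m, dpSched τ m j = if j = τ then (1 : ℤ) else 0 := by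
    intro j hj
    simp only [Finset.mem_Icc] at hj
    unfold dpSched
    by_cases hjτ : j = τ
    · rw [if_pos hjτ, if_pos ⟨0, by omega⟩]
    · rw [if_neg hjτ, if_neg]
      rintro ⟨i, rfl⟩
      rcases i with _ | i
      · omega
      · have : (i + 1) * m = i * m + m := by ring
        omega
  rw [Finset.sum_congr rfl hstep, Finset.sum_ite_eq' (Finset.Icc 1 m) τ (fun _ => (1 : ℤ)),
    if_pos (Finset.mem_Icc.2 ⟨hτ1, hτm⟩)]

lemma dpSched_per (τ m : ℕ) (hτ1 : 1 ≤ τ) (hτm : τ ≤ m) :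
    ∀ j, m < j → dpSched τ m j = dpSched τ m (j - m) := by
  intro j hj
  unfold dpSched
  refine if_congr ?_ rfl rfl
  constructor
  · rintro ⟨i, rfl⟩
    rcases i with _ | i
    · omega
    · have : (i + 1) * m = i * m + m := by ring
      exact ⟨i, by omega⟩
  · rintro ⟨i, hi⟩
    have : (i + 1) * m = i * m + m := by ring
    exact ⟨i + 1, by omega⟩

lemma dp_ereal_add_sSup_le (c : ℝ) (S : Set EReal) (t : EReal)
    (hmem : ∀ v ∈ S, (c : EReal) + v ≤ t) : (c : EReal) + sSup S ≤ t := by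
  rcases S.eq_empty_or_nonempty with rfl | hS
  · simp [sSup_empty]
  · have h1 : sSup S ≤ t - (c : EReal) := by
      apply sSup_le
      intro v hv
      refine (EReal.le_sub_iff_add_le (Or.inl (EReal.coe_ne_bot c))
        (Or.inl (EReal.coe_ne_top c))).2 ?_
      rw [add_comm]
      exact hmem v hv
    calc (c : EReal) + sSup S = sSup S + (c : EReal) := add_comm _ _
      _ ≤ t := (EReal.le_sub_iff_add_le (Or.inl (EReal.coe_ne_bot c))
          (Or.inl (EReal.coe_ne_top c))).1 h1

/-- Splitting the capacity sums at the last item. -/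
lemma dp_cap_split (k h ℓ : ℕ) (s : ℕ → ℤ) (x : ℕ → ℕ → ℤ) :
    ∑ j ∈ Finset.Icc 1 ℓ, ∑ i ∈ Finset.range (h + 1), s i * x i j
      = (∑ j ∈ Finset.Icc 1 ℓ, ∑ i ∈ Finset.range h, s i * x i j)
        + s h * ∑ j ∈ Finset.Icc 1 ℓ, x h j := by
  rw [Finset.mul_sum, ← Finset.sum_add_distrib]
  exact Finset.sum_congr rfl fun j _ => by rw [Finset.sum_range_succ]

/-- Splitting the objective at the last item. -/
lemma dp_obj_split (k h : ℕ) (s : ℕ → ℤ) (x : ℕ → ℕ → ℤ) :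
    DPobj k (h + 1) s x
      = DPobj k h s x
        + (s h : ℝ) * ∑ j ∈ Finset.Icc 1 k, ((k : ℝ) - (j : ℝ) + 1) * (x h j : ℝ) := by
  unfold DPobj
  rw [Finset.mul_sum, ← Finset.sum_add_distrib]
  exact Finset.sum_congr rfl fun j _ => by rw [Finset.sum_range_succ]; ring

/-- correctness of the dynamic programming recursion. For `h + 1` items with
nonempty feasible set,
`f_{h+1}(q) = max_{τ ∈ {1,...,k_{h+1}}, q'(τ) ≥ 0} [((k+k_{h+1})/2 + 1 - τ)·(k/k_{h+1})·s_{h+1} + f_h(q'(τ))]`,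
where `q' ℓ (τ) = q ℓ - ⌊(ℓ - τ + k_{h+1})/k_{h+1}⌋·s_{h+1}` (here the new item has index `h`). -/
theorem stmt_15 (n k : ℕ) (kc : ℕ → ℕ) (s : ℕ → ℤ) (h : ℕ) (q : ℕ → ℤ)
    (hk : 0 < k) (hh : h < n)
    (hkc : ∀ i < n, 0 < kc i ∧ kc i ∣ k)
    (hs : ∀ i < n, 0 < s i)
    (hfeas : ∃ x, DPFeasible k (h + 1) kc s q x) :
    DPf k kc s (h + 1) q =
      ((Finset.Icc 1 (kc h)).filter (fun τ =>
          ∀ ℓ, 1 ≤ ℓ → ℓ ≤ k → 0 ≤ q ℓ - (((ℓ : ℤ) - τ + kc h) / (kc h : ℤ)) * s h)).sup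
        (fun τ =>
          (((((k : ℝ) + (kc h : ℝ)) / 2 + 1 - (τ : ℝ)) * ((k : ℝ) / (kc h : ℝ)) * (s h : ℝ) : ℝ) : EReal)
            + DPf k kc s h (fun ℓ => q ℓ - (((ℓ : ℤ) - τ + kc h) / (kc h : ℤ)) * s h)) := by
  obtain ⟨hm, hdvd⟩ := hkc h hh
  have hshn : 0 < s h := hs h hh
  have hmemiff : ∀ b : ℤ,
      (b ∈ ((Finset.Icc 1 (kc h)) >>= fun a => (pure ((a : ℕ) : ℤ) : Finset ℤ))) ↔
        ∃ a₀ ∈ Finset.Icc 1 (kc h), ((a₀ : ℕ) : ℤ) = b := by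
    intro b
    letI : DecidableEq ℤ := fun a b => Classical.propDecidable (a = b)
    refine Iff.trans Finset.mem_sup ?_
    simp only [Finset.pure_def, Finset.mem_singleton]
    constructor
    · rintro ⟨a₀, ha₀, rfl⟩; exact ⟨a₀, ha₀, rfl⟩
    · rintro ⟨a₀, ha₀, rfl⟩; exact ⟨a₀, ha₀, rfl⟩
  simp only [DPf]
  apply le_antisymm
  · apply sSup_le
    rintro v ⟨x, ⟨hbin, hone, hper, hcap⟩, rfl⟩
    obtain ⟨τ, hτmem, hchar⟩ := dp_char k (kc h) hm (x h) (fun j => hbin h j)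
      (hone h (Nat.lt_succ_self h)) (fun j hj1 hj2 => hper h (Nat.lt_succ_self h) j hj1 hj2)
    obtain ⟨hτ1, hτm⟩ := Finset.mem_Icc.1 hτmem
    have hcum : ∀ ℓ ≤ k, ∑ j ∈ Finset.Icc 1 ℓ, x h j = ((ℓ : ℤ) - τ + kc h) / (kc h : ℤ) :=
      fun ℓ hℓ => dp_cum k (kc h) hm (x h) τ hτ1 hτm (fun j => hbin h j) hchar ℓ hℓ
    have hnn : ∀ ℓ : ℕ, 0 ≤ ∑ j ∈ Finset.Icc 1 ℓ, ∑ i ∈ Finset.range h, s i * x i j := by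
      intro ℓ
      apply Finset.sum_nonneg
      intro j _
      apply Finset.sum_nonneg
      intro i hi
      simp only [Finset.mem_range] at hi
      have hsi := hs i (by omega)
      rcases hbin i j with hx | hx <;> simp [hx]
      exact hsi.le
    have hfil : ∀ ℓ, 1 ≤ ℓ → ℓ ≤ k →
        0 ≤ q ℓ - (((ℓ : ℤ) - (τ : ℤ) + (kc h : ℤ)) / (kc h : ℤ)) * s h := by
      intro ℓ h1 h2
      have hc := hcap ℓ h1 h2
      rw [dp_cap_split k h ℓ s x, hcum ℓ h2] at hc
      have hn := hnn ℓ
      have hmc := mul_comm (s h) (((ℓ : ℤ) - τ + kc h) / (kc h : ℤ))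
      linarith
    have hfeas' : DPFeasible k h kc s
        (fun ℓ => q ℓ - (((ℓ : ℤ) - τ + kc h) / (kc h : ℤ)) * s h) x := by
      refine ⟨hbin, fun i hi => hone i (by omega), fun i hi => hper i (by omega),
        fun ℓ h1 h2 => ?_⟩
      show ∑ j ∈ Finset.Icc 1 ℓ, ∑ i ∈ Finset.range h, s i * x i j
        ≤ q ℓ - (((ℓ : ℤ) - τ + kc h) / (kc h : ℤ)) * s h
      have hc := hcap ℓ h1 h2
      rw [dp_cap_split k h ℓ s x, hcum ℓ h2] at hc
      have hmc := mul_comm (s h) (((ℓ : ℤ) - τ + kc h) / (kc h : ℤ))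
      linarith
    have hitem := dp_obj k (kc h) hm hdvd (x h) τ hτ1 hτm (fun j => hbin h j) hchar
    have hobj : DPobj k (h + 1) s x
        = ((((k : ℝ) + (kc h : ℝ)) / 2 + 1 - (((τ : ℤ)) : ℝ)) * ((k : ℝ) / (kc h : ℝ)) * (s h : ℝ))
          + DPobj k h s x := by
      rw [dp_obj_split k h s x, hitem]; push_cast; ring
    calc ((DPobj k (h + 1) s x : ℝ) : EReal)
        = (((((k : ℝ) + (kc h : ℝ)) / 2 + 1 - (((τ : ℤ)) : ℝ)) * ((k : ℝ) / (kc h : ℝ)) * (s h : ℝ) : ℝ) : EReal)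
          + ((DPobj k h s x : ℝ) : EReal) := by
            rw [hobj, EReal.coe_add]
      _ ≤ (((((k : ℝ) + (kc h : ℝ)) / 2 + 1 - (((τ : ℤ)) : ℝ)) * ((k : ℝ) / (kc h : ℝ)) * (s h : ℝ) : ℝ) : EReal)
          + sSup {v : EReal | ∃ x, DPFeasible k h kc s
              (fun ℓ => q ℓ - (((ℓ : ℤ) - τ + kc h) / (kc h : ℤ)) * s h) x
            ∧ v = (DPobj k h s x : EReal)} := by
          refine add_le_add (le_refl _) (le_sSup ?_)
          exact ⟨x, hfeas', rfl⟩
      _ ≤ _ := by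
          refine Finset.le_sup (f := fun τ : ℤ =>
            (((((k : ℝ) + (kc h : ℝ)) / 2 + 1 - (τ : ℝ)) * ((k : ℝ) / (kc h : ℝ)) * (s h : ℝ) : ℝ) : EReal)
              + sSup {v : EReal | ∃ x, DPFeasible k h kc s
                  (fun ℓ => q ℓ - (((ℓ : ℤ) - τ + kc h) / (kc h : ℤ)) * s h) x
                ∧ v = (DPobj k h s x : EReal)}) (b := ((τ : ℕ) : ℤ)) ?_
          simp only [Finset.mem_filter]
          exact ⟨(hmemiff _).2 ⟨τ, hτmem, rfl⟩, hfil⟩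
  · apply Finset.sup_le
    intro τ hτf
    simp only [Finset.mem_filter] at hτf
    obtain ⟨hτmem, -⟩ := hτf
    obtain ⟨a, hamem, ha⟩ := (hmemiff τ).1 hτmem
    subst ha
    obtain ⟨hτ1, hτm⟩ := Finset.mem_Icc.1 hamem
    apply dp_ereal_add_sSup_le
    rintro v ⟨x', ⟨hbin', hone', hper', hcap'⟩, rfl⟩
    set xnew : ℕ → ℕ → ℤ := fun i j => if i = h then dpSched a (kc h) j else x' i j with hxnewdef
    have hxh : ∀ j, xnew h j = dpSched a (kc h) j := fun j => if_pos rfl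
    have hxlt : ∀ i, i ≠ h → ∀ j, xnew i j = x' i j := fun i hi j => if_neg hi
    have hcumy : ∀ ℓ ≤ k, ∑ j ∈ Finset.Icc 1 ℓ, dpSched a (kc h) j
        = ((ℓ : ℤ) - (a : ℕ) + kc h) / (kc h : ℤ) :=
      fun ℓ hℓ => dp_cum k (kc h) hm (dpSched a (kc h)) a hτ1 hτm (dpSched_binary a (kc h))
        (fun j _ _ => dpSched_char a (kc h) j) ℓ hℓ
    have hfnew : DPFeasible k (h + 1) kc s q xnew := by
      refine ⟨?_, ?_, ?_, ?_⟩
      · intro i j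
        by_cases hih : i = h
        · rw [hih, hxh]; exact dpSched_binary a (kc h) j
        · rw [hxlt i hih]; exact hbin' i j
      · intro i hi
        by_cases hih : i = h
        · rw [hih, Finset.sum_congr rfl (fun j _ => hxh j)]
          exact dpSched_sum a (kc h) hτ1 hτm
        · rw [Finset.sum_congr rfl (fun j _ => hxlt i hih j)]
          exact hone' i (by omega)
      · intro i hi j hj1 hj2
        by_cases hih : i = h
        · rw [hih, hxh, hxh]
          exact dpSched_per a (kc h) hτ1 hτm j (by rw [hih] at hj1; exact hj1)
        · rw [hxlt i hih, hxlt i hih]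
          exact hper' i (by omega) j hj1 hj2
      · intro ℓ h1 h2
        rw [dp_cap_split k h ℓ s xnew]
        have hA : ∑ j ∈ Finset.Icc 1 ℓ, ∑ i ∈ Finset.range h, s i * xnew i j
            = ∑ j ∈ Finset.Icc 1 ℓ, ∑ i ∈ Finset.range h, s i * x' i j := by
          refine Finset.sum_congr rfl fun j _ => Finset.sum_congr rfl fun i hi => ?_
          simp only [Finset.mem_range] at hi
          rw [hxlt i (by omega) j]
        have hB : ∑ j ∈ Finset.Icc 1 ℓ, xnew h j = ((ℓ : ℤ) - (a : ℕ) + kc h) / (kc h : ℤ) := by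
          rw [Finset.sum_congr rfl (fun j _ => hxh j)]
          exact hcumy ℓ h2
        rw [hA, hB]
        have hc : ∑ j ∈ Finset.Icc 1 ℓ, ∑ i ∈ Finset.range h, s i * x' i j
            ≤ q ℓ - (((ℓ : ℤ) - (a : ℕ) + kc h) / (kc h : ℤ)) * s h := hcap' ℓ h1 h2
        have hmc := mul_comm (s h) (((ℓ : ℤ) - (a : ℕ) + kc h) / (kc h : ℤ))
        linarith
    have hitem := dp_obj k (kc h) hm hdvd (dpSched a (kc h)) a hτ1 hτm (dpSched_binary a (kc h))
      (fun j _ _ => dpSched_char a (kc h) j)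
    have hobjnew : DPobj k (h + 1) s xnew
        = ((((k : ℝ) + (kc h : ℝ)) / 2 + 1 - (((a : ℤ)) : ℝ)) * ((k : ℝ) / (kc h : ℝ)) * (s h : ℝ))
          + DPobj k h s x' := by
      rw [dp_obj_split k h s xnew]
      have hA : DPobj k h s xnew = DPobj k h s x' := by
        unfold DPobj
        refine Finset.sum_congr rfl fun j _ => ?_
        congr 1
        refine Finset.sum_congr rfl fun i hi => ?_
        simp only [Finset.mem_range] at hi
        rw [hxlt i (by omega) j]
      have hB : ∑ j ∈ Finset.Icc 1 k, ((k : ℝ) - (j : ℝ) + 1) * (xnew h j : ℝ)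
          = (((k : ℝ) + (kc h : ℝ)) / 2 + 1 - (((a : ℤ)) : ℝ)) * ((k : ℝ) / (kc h : ℝ)) := by
        rw [Finset.sum_congr rfl (fun j _ => by rw [hxh j])]
        exact hitem
      rw [hA, hB]; push_cast; ring
    rw [← EReal.coe_add]
    exact le_sSup ⟨xnew, hfnew, by rw [hobjnew]⟩
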